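/- Let Φ be a 3-CNF formula with clauses C_1,…,C_n, and let E be a set consisting of c_0, …, c_{n+1} together with exactly one of a_i and na_i for each i ∈ [1,m]. If E is an elementary set for P^Φ, then for each clause C_i, at least one atom of NV(c_i) is not in E. -/
import Mathlib


structure Rule (α : Type) where
  B : Finset α
  F : Finset α
  H : Finset α

variable {α : Type}

/-- Z is outbound in Y for program P. -/
def Outbound [DecidableEq α] (P : Set (Rule α)) (Y Z : Finset α) : Prop :=
  ∃ r ∈ P, (r.H ∩ Z).Nonempty ∧ (r.B ∩ (Y \ Z)).Nonempty ∧
    r.B ∩ Z = ∅ ∧ r.H ∩ (Y \ Z) = ∅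

/-- Y is an elementary set for P. -/
def Elementary [DecidableEq α] (P : Set (Rule α)) (Y : Finset α) : Prop :=
  Y.Nonempty ∧ ∀ Z : Finset α, Z ⊂ Y → Z.Nonempty → Outbound P Y Z

/-- X is a disjunctive set for P. -/
def DisjSet [DecidableEq α] (P : Set (Rule α)) (X : Finset α) : Prop :=
  ∃ r ∈ P, 1 < (r.H ∩ X).card

/-- The projection P_X of P on a set X of atoms. -/
def proj [DecidableEq α] (P : Set (Rule α)) (X : Finset α) : Set (Rule α) :=
  {r' | ∃ r ∈ P, (r.B ∩ X).Nonempty ∧ (r.H ∩ X).Nonempty ∧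
        r' = ⟨r.B ∩ X, ∅, r.H ∩ X⟩}

/-- P is head-elementary-set-free. -/
def HEF [DecidableEq α] (P : Set (Rule α)) : Prop :=
  ∀ r ∈ P, ∀ E : Finset α, Elementary P E → (E ∩ r.H).card ≤ 1

/-- Atoms of the program `P^Φ`. -/
inductive Atom : Type
  | phi : Atom
  | a : ℕ → Atom
  | na : ℕ → Atom
  | c : ℕ → Atom
deriving DecidableEq

/-- The atom opposite to a literal (variable index, sign). -/
def oppAtom : ℕ × Bool → Atom
  | (v, true) => Atom.na v
  | (v, false) => Atom.a v

/-- The atom corresponding to a literal. -/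
def litAtom : ℕ × Bool → Atom
  | (v, true) => Atom.a v
  | (v, false) => Atom.na v

/-- NV(c_i): opposites of the atoms of the literals of clause C_i. -/
def NV (C : ℕ → Fin 3 → ℕ × Bool) (i : ℕ) : Finset Atom :=
  {oppAtom (C i 0), oppAtom (C i 1), oppAtom (C i 2)}

/-- The program `P^Φ` associated with a 3-CNF with m variables `A_1,…,A_m`
and n clauses `C_1,…,C_n`, the clauses given by `C`. -/
def PPhi (m n : ℕ) (C : ℕ → Fin 3 → ℕ × Bool) : Set (Rule Atom) :=
  ({⟨{Atom.phi}, ∅, {Atom.c 0, Atom.c (n+1)}⟩,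
    ⟨{Atom.c 0}, ∅, {Atom.c 1}⟩,
    ⟨{Atom.c (n+1), Atom.na 1}, ∅, {Atom.a 1}⟩,
    ⟨{Atom.c (n+1), Atom.a 1}, ∅, {Atom.na 1}⟩,
    ⟨{Atom.a m, Atom.na m}, ∅, {Atom.c 0}⟩} : Set (Rule Atom)) ∪
  {r | ∃ i ∈ Finset.Icc 1 n, ∃ α ∈ NV C i,
        r = ⟨{Atom.c i, α}, ∅, {Atom.c (i+1)}⟩} ∪
  {r | ∃ i ∈ Finset.Icc 1 (m-1),
        r = ⟨{Atom.a i, Atom.na (i+1)}, ∅, {Atom.a (i+1)}⟩ ∨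
        r = ⟨{Atom.a i, Atom.a (i+1)}, ∅, {Atom.na (i+1)}⟩ ∨
        r = ⟨{Atom.na i, Atom.na (i+1)}, ∅, {Atom.a (i+1)}⟩ ∨
        r = ⟨{Atom.na i, Atom.a (i+1)}, ∅, {Atom.na (i+1)}⟩}

/-- All variable indices mentioned by clauses 1..n lie in [1,m]. -/
def ValidCNF (m n : ℕ) (C : ℕ → Fin 3 → ℕ × Bool) : Prop :=
  ∀ i ∈ Finset.Icc 1 n, ∀ j : Fin 3, (C i j).1 ∈ Finset.Icc 1 m

/-- Truth assignment X satisfies the 3-CNF. -/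
def Sat (n : ℕ) (C : ℕ → Fin 3 → ℕ × Bool) (X : ℕ → Bool) : Prop :=
  ∀ i ∈ Finset.Icc 1 n, ∃ j : Fin 3, X (C i j).1 = (C i j).2

theorem stmt11 (m n : ℕ) (hm : 1 ≤ m) (hn : 1 ≤ n)
    (C : ℕ → Fin 3 → ℕ × Bool) (hC : ValidCNF m n C)
    (Q : ℕ → Bool) (E : Finset Atom)
    (hEdef : E = (Finset.Icc 0 (n+1)).image Atom.c ∪
      (Finset.Icc 1 m).image (fun i => if Q i then Atom.a i else Atom.na i))
    (hE : Elementary (PPhi m n C) E) :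
    ∀ i ∈ Finset.Icc 1 n, ∃ β ∈ NV C i, β ∉ E := by
  intro i hi
  by_contra hcon
  push_neg at hcon
  obtain ⟨hi1, hin⟩ := Finset.mem_Icc.mp hi
  subst hEdef
  set E : Finset Atom := (Finset.Icc 0 (n+1)).image Atom.c ∪
      (Finset.Icc 1 m).image (fun i => if Q i then Atom.a i else Atom.na i) with hEdef
  set Z : Finset Atom := (Finset.Icc (i+1) (n+1)).image Atom.c ∪
      (Finset.Icc 1 m).image (fun i => if Q i then Atom.a i else Atom.na i) with hZdef
  have hcE : ∀ j, Atom.c j ∈ E ↔ j ≤ n+1 := by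
    intro j
    simp only [hEdef, Finset.mem_union, Finset.mem_image, Finset.mem_Icc]
    constructor
    · rintro (⟨k, hk1, hk2⟩ | ⟨k, hk1, hk2⟩)
      · injection hk2 with h; omega
      · by_cases hq : Q k <;> simp [hq] at hk2
    · intro h; exact Or.inl ⟨j, ⟨Nat.zero_le _, h⟩, rfl⟩
  have hcZ : ∀ j, Atom.c j ∈ Z ↔ i+1 ≤ j ∧ j ≤ n+1 := by
    intro j
    simp only [hZdef, Finset.mem_union, Finset.mem_image, Finset.mem_Icc]
    constructor
    · rintro (⟨k, hk1, hk2⟩ | ⟨k, hk1, hk2⟩)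
      · injection hk2 with h; omega
      · by_cases hq : Q k <;> simp [hq] at hk2
    · intro h; exact Or.inl ⟨j, h, rfl⟩
  have haE : ∀ j, Atom.a j ∈ E ↔ (1 ≤ j ∧ j ≤ m ∧ Q j = true) := by
    intro j
    simp only [hEdef, Finset.mem_union, Finset.mem_image, Finset.mem_Icc]
    constructor
    · rintro (⟨k, hk1, hk2⟩ | ⟨k, hk1, hk2⟩)
      · simp at hk2
      · by_cases hq : Q k
        · simp only [hq, if_true] at hk2
          injection hk2 with h; subst h; exact ⟨hk1.1, hk1.2, hq⟩
        · simp [hq] at hk2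
    · rintro ⟨h1, h2, h3⟩; exact Or.inr ⟨j, ⟨h1, h2⟩, by simp [h3]⟩
  have haZ : ∀ j, Atom.a j ∈ Z ↔ (1 ≤ j ∧ j ≤ m ∧ Q j = true) := by
    intro j
    simp only [hZdef, Finset.mem_union, Finset.mem_image, Finset.mem_Icc]
    constructor
    · rintro (⟨k, hk1, hk2⟩ | ⟨k, hk1, hk2⟩)
      · simp at hk2
      · by_cases hq : Q k
        · simp only [hq, if_true] at hk2
          injection hk2 with h; subst h; exact ⟨hk1.1, hk1.2, hq⟩
        · simp [hq] at hk2
    · rintro ⟨h1, h2, h3⟩; exact Or.inr ⟨j, ⟨h1, h2⟩, by simp [h3]⟩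
  have hnaE : ∀ j, Atom.na j ∈ E ↔ (1 ≤ j ∧ j ≤ m ∧ Q j = false) := by
    intro j
    simp only [hEdef, Finset.mem_union, Finset.mem_image, Finset.mem_Icc]
    constructor
    · rintro (⟨k, hk1, hk2⟩ | ⟨k, hk1, hk2⟩)
      · simp at hk2
      · by_cases hq : Q k
        · simp [hq] at hk2
        · simp only [hq, if_false, Bool.false_eq_true] at hk2
          injection hk2 with h; subst h; exact ⟨hk1.1, hk1.2, by simpa using hq⟩
    · rintro ⟨h1, h2, h3⟩; exact Or.inr ⟨j, ⟨h1, h2⟩, by simp [h3]⟩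
  have hnaZ : ∀ j, Atom.na j ∈ Z ↔ (1 ≤ j ∧ j ≤ m ∧ Q j = false) := by
    intro j
    simp only [hZdef, Finset.mem_union, Finset.mem_image, Finset.mem_Icc]
    constructor
    · rintro (⟨k, hk1, hk2⟩ | ⟨k, hk1, hk2⟩)
      · simp at hk2
      · by_cases hq : Q k
        · simp [hq] at hk2
        · simp only [hq, if_false, Bool.false_eq_true] at hk2
          injection hk2 with h; subst h; exact ⟨hk1.1, hk1.2, by simpa using hq⟩
    · rintro ⟨h1, h2, h3⟩; exact Or.inr ⟨j, ⟨h1, h2⟩, by simp [h3]⟩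
  have hphiE : Atom.phi ∉ E := by
    simp only [hEdef, Finset.mem_union, Finset.mem_image, Finset.mem_Icc]
    rintro (⟨k, hk1, hk2⟩ | ⟨k, hk1, hk2⟩)
    · simp at hk2
    · by_cases hq : Q k <;> simp [hq] at hk2
  -- every literal atom of E is in Z
  have hlitEZ : ∀ x : Atom, x ∈ E → x ∈ Z ∨ ∃ j, x = Atom.c j := by
    rintro (_ | j | j | j) hx
    · exact absurd hx hphiE
    · exact Or.inl ((haZ j).mpr ((haE j).mp hx))
    · exact Or.inl ((hnaZ j).mpr ((hnaE j).mp hx))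
    · exact Or.inr ⟨j, rfl⟩
  have hZsub : Z ⊂ E := by
    constructor
    · intro x hx
      rcases Finset.mem_union.mp hx with h | h
      · obtain ⟨k, hk1, hk2⟩ := Finset.mem_image.mp h
        subst hk2
        exact (hcE k).mpr (Finset.mem_Icc.mp hk1).2
      · exact Finset.mem_union_right _ h
    · intro hsub
      have h0 : Atom.c 0 ∈ Z := hsub ((hcE 0).mpr (by omega))
      have := (hcZ 0).mp h0
      omega
  have hZne : Z.Nonempty := ⟨Atom.c (n+1), (hcZ (n+1)).mpr ⟨by omega, le_refl _⟩⟩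
  obtain ⟨r, hr, ⟨x, hx⟩, ⟨y, hy⟩, hBZ, hHE⟩ := hE.2 Z hZsub hZne
  rw [Finset.mem_inter] at hx hy
  rw [Finset.mem_sdiff] at hy
  -- y is in B ∩ (E \ Z); any literal atom of E is in Z, so y must be a c-atom
  have hyc : ∃ j, y = Atom.c j := by
    rcases hlitEZ y hy.2.1 with h | h
    · exact absurd h hy.2.2
    · exact h
  rcases hr with (hr | hr) | hr
  · -- the five fixed rules
    simp only [Set.mem_insert_iff, Set.mem_singleton_iff] at hr
    rcases hr with rfl | rfl | rfl | rfl | rfl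
    · -- phi rule: the body is {phi}, but phi ∉ E, so y cannot exist
      have hy1 : y ∈ ({Atom.phi} : Finset Atom) := hy.1
      rw [Finset.mem_singleton] at hy1
      exact hphiE (hy1 ▸ hy.2.1)
    · -- c0 → c1 : x = c 1 ∈ Z forces i+1 ≤ 1
      have hx1 : x ∈ ({Atom.c 1} : Finset Atom) := hx.1
      rw [Finset.mem_singleton] at hx1
      subst hx1
      have := (hcZ 1).mp hx.2
      omega
    · -- c_{n+1} ∧ na_1 → a_1 : c (n+1) ∈ B ∩ Z contradicts hBZ
      have h1 : Atom.c (n+1) ∈ ({Atom.c (n+1), Atom.na 1} : Finset Atom) ∩ Z :=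
        Finset.mem_inter.mpr ⟨by simp, (hcZ (n+1)).mpr ⟨by omega, le_refl _⟩⟩
      exact Finset.eq_empty_iff_forall_notMem.mp hBZ _ h1
    · have h1 : Atom.c (n+1) ∈ ({Atom.c (n+1), Atom.a 1} : Finset Atom) ∩ Z :=
        Finset.mem_inter.mpr ⟨by simp, (hcZ (n+1)).mpr ⟨by omega, le_refl _⟩⟩
      exact Finset.eq_empty_iff_forall_notMem.mp hBZ _ h1
    · -- a_m ∧ na_m → c_0 : x = c 0 ∈ Z impossible
      have hx1 : x ∈ ({Atom.c 0} : Finset Atom) := hx.1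
      rw [Finset.mem_singleton] at hx1
      subst hx1
      have := (hcZ 0).mp hx.2
      omega
  · -- clause rules
    obtain ⟨j, hj, α, hα, rfl⟩ := hr
    obtain ⟨hj1, hjn⟩ := Finset.mem_Icc.mp hj
    have hx1 : x ∈ ({Atom.c (j+1)} : Finset Atom) := hx.1
    rw [Finset.mem_singleton] at hx1
    subst hx1
    have hxz' := (hcZ (j+1)).mp hx.2
    have hcjZ : Atom.c j ∉ Z := by
      intro h
      have h1 : Atom.c j ∈ ({Atom.c j, α} : Finset Atom) ∩ Z :=
        Finset.mem_inter.mpr ⟨by simp, h⟩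
      exact Finset.eq_empty_iff_forall_notMem.mp hBZ _ h1
    have hji : j = i := by
      have h2 : ¬(i + 1 ≤ j ∧ j ≤ n + 1) := fun h => hcjZ ((hcZ j).mpr h)
      omega
    subst hji
    have hαE : α ∈ E := hcon α hα
    have hαZ : α ∈ Z := by
      rcases hlitEZ α hαE with h | ⟨k, rfl⟩
      · exact h
      · -- α is a c-atom: impossible since α ∈ NV C j
        exfalso
        have hne : ∀ p : ℕ × Bool, oppAtom p ≠ Atom.c k := by
          rintro ⟨v, b⟩; cases b <;> simp [oppAtom]
        simp only [NV, Finset.mem_insert, Finset.mem_singleton] at hα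
        rcases hα with h | h | h <;> exact hne _ h.symm
    have h1 : α ∈ ({Atom.c j, α} : Finset Atom) ∩ Z :=
      Finset.mem_inter.mpr ⟨by simp, hαZ⟩
    exact Finset.eq_empty_iff_forall_notMem.mp hBZ _ h1
  · -- chain rules: body consists of literal atoms, but y is a c-atom in the body
    obtain ⟨j, hj, hr⟩ := hr
    obtain ⟨k, rfl⟩ := hyc
    rcases hr with rfl | rfl | rfl | rfl
    · have h1 : Atom.c k ∈ ({Atom.a j, Atom.na (j+1)} : Finset Atom) := hy.1
      simp at h1
    · have h1 : Atom.c k ∈ ({Atom.a j, Atom.a (j+1)} : Finset Atom) := hy.1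
      simp at h1
    · have h1 : Atom.c k ∈ ({Atom.na j, Atom.na (j+1)} : Finset Atom) := hy.1
      simp at h1
    · have h1 : Atom.c k ∈ ({Atom.na j, Atom.a (j+1)} : Finset Atom) := hy.1
      simp at h1
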